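/- For any real number r ≥ 0 and any elements a, b of a real inner product space E, one has ⟨‖a‖^r • a - ‖b‖^r • b, a - b⟩ ≥ (1/2) * (‖a‖^r + ‖b‖^r) * ‖a - b‖^2. -/
import Mathlib


open RealInnerProductSpace

theorem stmt_1 {E : Type*} [NormedAddCommGroup E] [InnerProductSpace ℝ E]
    (r : ℝ) (hr : 0 ≤ r) (a b : E) :
    ⟪(‖a‖ ^ r) • a - (‖b‖ ^ r) • b, a - b⟫ ≥
      (1 / 2) * (‖a‖ ^ r + ‖b‖ ^ r) * ‖a - b‖ ^ 2 := by
  have ha : (0:ℝ) ≤ ‖a‖ := norm_nonneg a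
  have hb : (0:ℝ) ≤ ‖b‖ := norm_nonneg b
  have hkey : 0 ≤ (‖a‖ ^ r - ‖b‖ ^ r) * (‖a‖ - ‖b‖) := by
    rcases le_total ‖a‖ ‖b‖ with h | h
    · have := Real.rpow_le_rpow ha h hr
      nlinarith
    · have := Real.rpow_le_rpow hb h hr
      nlinarith
  have hexp : ⟪(‖a‖ ^ r) • a - (‖b‖ ^ r) • b, a - b⟫ =
      ‖a‖ ^ r * ‖a‖ ^ 2 - (‖a‖ ^ r + ‖b‖ ^ r) * ⟪a, b⟫ + ‖b‖ ^ r * ‖b‖ ^ 2 := by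
    simp [inner_sub_left, inner_sub_right, inner_smul_left,
      real_inner_self_eq_norm_sq, real_inner_comm b a]
    ring
  have hns : ‖a - b‖ ^ 2 = ‖a‖ ^ 2 - 2 * ⟪a, b⟫ + ‖b‖ ^ 2 := norm_sub_sq_real a b
  rw [hexp, hns]
  nlinarith [hkey, sq_nonneg (‖a‖ - ‖b‖)]
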